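/- Hofer's Lemma: Let (X,d) be a metric space, f : X → [0,∞) a continuous function, x ∈ X a point, and δ > 0 a number. Assume that the closed ball of radius 2δ around x is complete (as a metric space with the induced metric). Then there exist a point ξ ∈ X and a number ε with 0 < ε ≤ δ such that d(x,ξ) < 2δ, sup over the open ball B_ε(ξ) of f is at most 2 f(ξ), and ε f(ξ) ≥ δ f(x). -/

import Mathlib

open Topology Filter Finset

/-- **Hofer's Lemma.** Let `(X,d)` be a metric space, `f : X → [0,∞)` continuous,
`x ∈ X`, `δ > 0`. If the closed ball of radius `2δ` around `x` is complete, then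
there are `ξ ∈ X` and `0 < ε ≤ δ` with `d(x,ξ) < 2δ`, `sup_{B_ε(ξ)} f ≤ 2 f(ξ)`,
and `ε f(ξ) ≥ δ f(x)`. -/
theorem hofer_lemma {X : Type*} [MetricSpace X] (f : X → ℝ)
    (hf_cont : Continuous f) (hf_nonneg : ∀ y, 0 ≤ f y)
    (x : X) (δ : ℝ) (hδ : 0 < δ)
    (hcomplete : IsComplete (Metric.closedBall x (2 * δ))) :
    ∃ (ξ : X) (ε : ℝ), 0 < ε ∧ ε ≤ δ ∧ dist x ξ < 2 * δ ∧
      (∀ y ∈ Metric.ball ξ ε, f y ≤ 2 * f ξ) ∧ δ * f x ≤ ε * f ξ := by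
  by_contra H
  push_neg at H
  have reformulation : ∀ (x') (k : ℕ), δ * f x ≤ δ / 2 ^ k * f x' ↔ 2 ^ k * f x ≤ f x' := by
    intro x' k
    rw [div_mul_eq_mul_div, le_div_iff₀ (by positivity), mul_assoc,
      mul_le_mul_iff_right₀ hδ, mul_comm]
  replace H : ∀ k : ℕ, ∀ x', dist x x' < 2 * δ ∧ 2 ^ k * f x ≤ f x' →
      ∃ y, dist x' y < δ / 2 ^ k ∧ 2 * f x' < f y := by
    intro k x' ⟨h1, h2⟩
    by_contra hball
    push_neg at hball
    have := H x' (δ / 2 ^ k) (by positivity)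
      (div_le_self hδ.le <| one_le_pow₀ one_le_two) h1
      (fun y hy => hball y (by rwa [Metric.mem_ball, dist_comm] at hy))
    exact absurd ((reformulation x' k).2 h2) (not_le.2 this)
  haveI : Nonempty X := ⟨x⟩
  choose! F hF using H
  let u : ℕ → X := fun n => Nat.recOn n x F
  have hu : ∀ n, dist x (u n) < 2 * δ ∧ 2 ^ n * f x ≤ f (u n) →
      dist (u n) (u (n + 1)) < δ / 2 ^ n ∧ 2 * f (u n) < f (u (n + 1)) :=
    fun n => hF n (u n)
  -- Key properties of u, by strong induction
  have key : ∀ n, dist (u n) (u (n + 1)) < δ / 2 ^ n ∧ 2 * f (u n) < f (u (n + 1)) := by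
    intro n
    induction n using Nat.case_strong_induction_on with
    | hz => exact hu 0 ⟨by simpa [u] using by positivity, by simp [u]⟩
    | hi n IH =>
      have A : dist x (u (n + 1)) < 2 * δ := by
        calc
          dist x (u (n + 1)) = dist (u 0) (u (n + 1)) := rfl
          _ ≤ ∑ i ∈ range (n + 1), dist (u i) (u (i + 1)) := dist_le_range_sum_dist u (n + 1)
          _ < ∑ i ∈ range (n + 1), δ / 2 ^ i := by
            apply Finset.sum_lt_sum_of_nonempty (by simp)
            intro i hi
            exact (IH i <| Nat.lt_succ_iff.mp <| Finset.mem_range.mp hi).1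
          _ = (∑ i ∈ range (n + 1), (1 / 2 : ℝ) ^ i) * δ := by
            rw [Finset.sum_mul]; exact Finset.sum_congr rfl fun i _ => by rw [one_div, inv_pow, div_eq_mul_inv, mul_comm]
          _ ≤ 2 * δ := by gcongr; apply sum_geometric_two_le
      have B : 2 ^ (n + 1) * f x ≤ f (u (n + 1)) := by
        refine @geom_le (f ∘ u) _ zero_le_two (n + 1) fun m hm => ?_
        exact (IH _ <| Nat.lt_add_one_iff.1 hm).2.le
      exact hu (n + 1) ⟨A, B⟩
  obtain ⟨key₁, key₂⟩ := forall_and.mp key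
  -- u is Cauchy
  have cauchy_u : CauchySeq u := by
    refine cauchySeq_of_le_geometric _ δ one_half_lt_one fun n => ?_
    have h := key₁ n; rw [div_eq_mul_inv, ← inv_pow, ← one_div] at h; exact h.le
  -- u stays in the closed ball
  have hud : ∀ n, dist x (u n) < 2 * δ := by
    intro n
    cases n with
    | zero => simpa [u] using by positivity
    | succ n =>
      calc
        dist x (u (n + 1)) = dist (u 0) (u (n + 1)) := rfl
        _ ≤ ∑ i ∈ range (n + 1), dist (u i) (u (i + 1)) := dist_le_range_sum_dist u (n + 1)
        _ < ∑ i ∈ range (n + 1), δ / 2 ^ i := by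
          apply Finset.sum_lt_sum_of_nonempty (by simp)
          intro i _
          exact key₁ i
        _ = (∑ i ∈ range (n + 1), (1 / 2 : ℝ) ^ i) * δ := by
          rw [Finset.sum_mul]; exact Finset.sum_congr rfl fun i _ => by rw [one_div, inv_pow, div_eq_mul_inv, mul_comm]
        _ ≤ 2 * δ := by gcongr; apply sum_geometric_two_le
  have mem_u : ∀ n, u n ∈ Metric.closedBall x (2 * δ) := fun n =>
    Metric.mem_closedBall.2 (by rw [dist_comm]; exact (hud n).le)
  obtain ⟨y, -, limy⟩ := cauchySeq_tendsto_of_isComplete hcomplete mem_u cauchy_u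
  -- f ∘ u tends to infinity
  have lim_top : Tendsto (f ∘ u) atTop atTop := by
    let v n := (f ∘ u) (n + 1)
    suffices Tendsto v atTop atTop by rwa [tendsto_add_atTop_iff_nat] at this
    have hv₀ : 0 < v 0 := by
      calc
        0 ≤ 2 * f (u 0) := by specialize hf_nonneg x; positivity
        _ < f (u (0 + 1)) := key₂ 0
    apply tendsto_atTop_of_geom_le hv₀ one_lt_two
    exact fun n => (key₂ (n + 1)).le
  have lim : Tendsto (f ∘ u) atTop (𝓝 (f y)) := Tendsto.comp hf_cont.continuousAt limy
  exact not_tendsto_atTop_of_tendsto_nhds lim lim_top
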